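/- Fix μ_X, μ_Y ∈ ℝ, σ_X, σ_Y > 0 and r ∈ ℝ. For κ > 0 with r > μ_X − κσ_X, let ψ(κ) denote the larger root of Q₃(a; κ) = (1/2)Σ²a(a−1) + (μ_X − μ_Y − κ(σ_X + σ_Y))a + μ_Y + κσ_Y − r, and for κ > 0 with r > μ_Y − κσ_Y, let φ₋(κ) denote the smaller root of Q₁(a; κ) = (1/2)Σ²a(a−1) + (μ_X − μ_Y + κ(σ_X + σ_Y))a + μ_Y − κσ_Y − r. Then κ ↦ ψ(κ) is strictly increasing on the interval {κ > 0 : r > μ_X − κσ_X}, and κ ↦ φ₋(κ) is strictly decreasing on the interval {κ > 0 : r > μ_Y − κσ_Y}. -/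
import Mathlib


open Real

private lemma lt_add_sqrt' (b c t : ℝ) (h : (t - b) ^ 2 < b ^ 2 + c) :
    t < b + Real.sqrt (b ^ 2 + c) := by
  have hD : (0:ℝ) ≤ b ^ 2 + c := le_trans (sq_nonneg _) h.le
  have hs := Real.sq_sqrt hD
  have hn := Real.sqrt_nonneg (b ^ 2 + c)
  nlinarith [hs, hn, h]

private lemma sub_sqrt_lt' (b c t : ℝ) (h : (t - b) ^ 2 < b ^ 2 + c) :
    b - Real.sqrt (b ^ 2 + c) < t := by
  have hD : (0:ℝ) ≤ b ^ 2 + c := le_trans (sq_nonneg _) h.le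
  have hs := Real.sq_sqrt hD
  have hn := Real.sqrt_nonneg (b ^ 2 + c)
  nlinarith [hs, hn, h]

/-- With `ψ(κ)` the larger root of `Q₃(·; κ)` and `φ₋(κ)` the smaller
root of `Q₁(·; κ)` (given by the explicit formulas), `κ ↦ ψ(κ)` is strictly
increasing on `{κ > 0 : r > μX − κσX}` and `κ ↦ φ₋(κ)` is strictly decreasing on
`{κ > 0 : r > μY − κσY}`. -/
theorem roots_monotone_in_ambiguity (μX μY σX σY r : ℝ)
    (hσX : 0 < σX) (hσY : 0 < σY) :
    let S2 : ℝ := σX ^ 2 + σY ^ 2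
    let ψ : ℝ → ℝ := fun κ => 1 / 2 - (μX - μY - κ * (σX + σY)) / S2 +
      Real.sqrt ((1 / 2 - (μX - μY - κ * (σX + σY)) / S2) ^ 2 +
        2 * (r - μY - κ * σY) / S2)
    let φ : ℝ → ℝ := fun κ => 1 / 2 - (μX - μY + κ * (σX + σY)) / S2 -
      Real.sqrt ((1 / 2 - (μX - μY + κ * (σX + σY)) / S2) ^ 2 +
        2 * (r - μY + κ * σY) / S2)
    StrictMonoOn ψ {κ : ℝ | 0 < κ ∧ μX - κ * σX < r} ∧
    StrictAntiOn φ {κ : ℝ | 0 < κ ∧ μY - κ * σY < r} := by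
  intro S2 ψ φ
  have hS2 : (0:ℝ) < σX ^ 2 + σY ^ 2 := by positivity
  have hS2' : (0:ℝ) < S2 := hS2
  have hS2ne : S2 ≠ 0 := ne_of_gt hS2'
  constructor
  · intro κ₁ h₁ κ₂ h₂ h12
    obtain ⟨hk1, hr1⟩ := h₁
    obtain ⟨hk2, hr2⟩ := h₂
    show (1 / 2 - (μX - μY - κ₁ * (σX + σY)) / S2 +
      Real.sqrt ((1 / 2 - (μX - μY - κ₁ * (σX + σY)) / S2) ^ 2 +
        2 * (r - μY - κ₁ * σY) / S2)) <
      (1 / 2 - (μX - μY - κ₂ * (σX + σY)) / S2 +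
      Real.sqrt ((1 / 2 - (μX - μY - κ₂ * (σX + σY)) / S2) ^ 2 +
        2 * (r - μY - κ₂ * σY) / S2))
    set B1 : ℝ := 1 / 2 - (μX - μY - κ₁ * (σX + σY)) / S2 with hB1
    set B2 : ℝ := 1 / 2 - (μX - μY - κ₂ * (σX + σY)) / S2 with hB2
    set C1 : ℝ := 2 * (r - μY - κ₁ * σY) / S2 with hC1
    set C2 : ℝ := 2 * (r - μY - κ₂ * σY) / S2 with hC2
    have hcb1 : 0 < C1 + 2 * B1 - 1 := by
      have h : C1 + 2 * B1 - 1 = 2 * (r - μX + κ₁ * σX) / S2 := by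
        rw [hB1, hC1]; show _ = _ / (σX ^ 2 + σY ^ 2); field_simp; ring
      rw [h]
      exact div_pos (by linarith) hS2'
    have e1 : ∀ u : ℝ, 2 * (B1 - B2) * u + (C1 - C2) =
        2 * (κ₂ - κ₁) * (σY - (σX + σY) * u) / S2 := by
      intro u
      rw [hB1, hB2, hC1, hC2]
      show _ = _ / (σX ^ 2 + σY ^ 2)
      field_simp; ring
    clear_value B1 B2 C1 C2
    clear hB1 hB2 hC1 hC2
    have hkey1 : ((1:ℝ) - B1) ^ 2 < B1 ^ 2 + C1 := by nlinarith [hcb1]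
    have ht1 : (1:ℝ) < B1 + Real.sqrt (B1 ^ 2 + C1) := lt_add_sqrt' B1 C1 1 hkey1
    have hD1 : (0:ℝ) ≤ B1 ^ 2 + C1 := le_trans (sq_nonneg _) hkey1.le
    set t : ℝ := B1 + Real.sqrt (B1 ^ 2 + C1) with htdef
    have hts : (t - B1) ^ 2 = B1 ^ 2 + C1 := by
      have := Real.sq_sqrt hD1
      rw [htdef]; simpa using this
    clear_value t
    apply lt_add_sqrt' B2 C2 t
    have hneg : 2 * (B1 - B2) * t + (C1 - C2) < 0 := by
      rw [e1 t]
      apply div_neg_of_neg_of_pos _ hS2'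
      have h1 : 0 < (σX + σY) * t - σY := by nlinarith [ht1]
      nlinarith [mul_pos (sub_pos.2 h12) h1]
    nlinarith [hneg, hts]
  · intro κ₁ h₁ κ₂ h₂ h12
    obtain ⟨hk1, hr1⟩ := h₁
    obtain ⟨hk2, hr2⟩ := h₂
    show (1 / 2 - (μX - μY + κ₂ * (σX + σY)) / S2 -
      Real.sqrt ((1 / 2 - (μX - μY + κ₂ * (σX + σY)) / S2) ^ 2 +
        2 * (r - μY + κ₂ * σY) / S2)) <
      (1 / 2 - (μX - μY + κ₁ * (σX + σY)) / S2 -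
      Real.sqrt ((1 / 2 - (μX - μY + κ₁ * (σX + σY)) / S2) ^ 2 +
        2 * (r - μY + κ₁ * σY) / S2))
    set B1 : ℝ := 1 / 2 - (μX - μY + κ₁ * (σX + σY)) / S2 with hB1
    set B2 : ℝ := 1 / 2 - (μX - μY + κ₂ * (σX + σY)) / S2 with hB2
    set C1 : ℝ := 2 * (r - μY + κ₁ * σY) / S2 with hC1
    set C2 : ℝ := 2 * (r - μY + κ₂ * σY) / S2 with hC2
    have hC1pos : (0:ℝ) < C1 := by
      rw [hC1]; exact div_pos (by linarith) hS2'
    have e1 : ∀ u : ℝ, 2 * (B1 - B2) * u + (C1 - C2) =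
        2 * (κ₂ - κ₁) * ((σX + σY) * u - σY) / S2 := by
      intro u
      rw [hB1, hB2, hC1, hC2]
      show _ = _ / (σX ^ 2 + σY ^ 2)
      field_simp; ring
    clear_value B1 B2 C1 C2
    clear hB1 hB2 hC1 hC2
    have hkey1 : ((0:ℝ) - B1) ^ 2 < B1 ^ 2 + C1 := by nlinarith [hC1pos]
    have ht0 : B1 - Real.sqrt (B1 ^ 2 + C1) < 0 := sub_sqrt_lt' B1 C1 0 hkey1
    have hD1 : (0:ℝ) ≤ B1 ^ 2 + C1 := le_trans (sq_nonneg _) hkey1.le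
    set t : ℝ := B1 - Real.sqrt (B1 ^ 2 + C1) with htdef
    have hts : (t - B1) ^ 2 = B1 ^ 2 + C1 := by
      have := Real.sq_sqrt hD1
      rw [htdef]
      calc (B1 - Real.sqrt (B1 ^ 2 + C1) - B1) ^ 2
          = Real.sqrt (B1 ^ 2 + C1) ^ 2 := by ring
        _ = B1 ^ 2 + C1 := this
    clear_value t
    apply sub_sqrt_lt' B2 C2 t
    have hneg : 2 * (B1 - B2) * t + (C1 - C2) < 0 := by
      rw [e1 t]
      apply div_neg_of_neg_of_pos _ hS2'
      have h1 : (σX + σY) * t - σY < 0 := by nlinarith [ht0]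
      nlinarith [mul_pos (sub_pos.2 h12) (neg_pos.2 h1)]
    nlinarith [hneg, hts]
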